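/- arXiv:2302.04802 — 2 statements merged into one kernel-verified Lean document; each statement's English description precedes it below -/
import Mathlib

section
/- Let f_c, f_m, c₀, d, r be positive real numbers, let φ ∈ (−1, 1), set η = f_c/f_m, and assume |η·φ| < 1. Define ζ = (1−φ²)/(2r), the spatial direction φ̄ = η·φ, the spatial range r̄ = (1 − η²φ²)·r / (η·(1 − φ²)), and ζ̄ = (1 − φ̄²)/(2r̄). Then: (i) for every natural number n, f_m·(n·d·φ̄ − n²·d²·ζ̄) = f_c·(n·d·φ − n²·d²·ζ); and (ii) for every N ≥ 1, the normalized near-field array gain G = (1/N²)·|∑_{n=0}^{N-1} exp((2πi/c₀)·(f_m·(n·d·φ̄ − n²·d²·ζ̄) − f_c·(n·d·φ − n²·d²·ζ)))|² equals 1, its maximum possible value over all choices of (φ̄, ζ̄). -/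
open Real Complex Finset

/-- The normalized near-field array gain
`G = (1/N²)·|∑_{n=0}^{N-1} exp((2πi/c₀)·(f_m(n d φ̄ − n² d² ζ̄) − f_c(n d φ − n² d² ζ)))|²`. -/
noncomputable def nfGain (c0 fc fm d φ ζ φbar ζbar : ℝ) (N : ℕ) : ℝ :=
  (1 / (N : ℝ) ^ 2) *
    ‖∑ n ∈ Finset.range N,
      Complex.exp ((2 * π * Complex.I / (c0 : ℂ)) *
        ((fm * ((n : ℝ) * d * φbar - (n : ℝ) ^ 2 * d ^ 2 * ζbar) -
          fc * ((n : ℝ) * d * φ - (n : ℝ) ^ 2 * d ^ 2 * ζ) : ℝ) : ℂ))‖ ^ 2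

lemma aux_abs_exp (c0 x : ℝ) :
    ‖Complex.exp ((2 * π * Complex.I / (c0 : ℂ)) * (x : ℂ))‖ = 1 := by
  rw [Complex.norm_exp]
  have : ((2 * π * Complex.I / (c0 : ℂ)) * (x : ℂ)).re = 0 := by
    simp [Complex.div_re, Complex.mul_re, Complex.mul_im]
  rw [this, Real.exp_zero]

/-- Forward direction of Theorem 1: with spatial direction `φ̄ = η φ` and spatial range
`r̄ = (1 − η²φ²) r / (η (1 − φ²))` (hence `ζ̄ = (1 − φ̄²)/(2 r̄)`), the per-antenna
phases match exactly, and the normalized near-field array gain equals `1`, which is its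
maximum possible value over all choices of `(φ̄', ζ̄')`. -/
theorem near_field_beam_split_focus (fc fm c0 d r : ℝ)
    (hfc : 0 < fc) (hfm : 0 < fm) (hc0 : 0 < c0) (hd : 0 < d) (hr : 0 < r)
    (φ : ℝ) (hφ : φ ∈ Set.Ioo (-1 : ℝ) 1) (hηφ : |(fc / fm) * φ| < 1)
    (η ζ φbar rbar ζbar : ℝ)
    (hη : η = fc / fm) (hζ : ζ = (1 - φ ^ 2) / (2 * r)) (hφbar : φbar = η * φ)
    (hrbar : rbar = (1 - η ^ 2 * φ ^ 2) * r / (η * (1 - φ ^ 2)))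
    (hζbar : ζbar = (1 - φbar ^ 2) / (2 * rbar)) :
    (∀ n : ℕ,
        fm * ((n : ℝ) * d * φbar - (n : ℝ) ^ 2 * d ^ 2 * ζbar) =
          fc * ((n : ℝ) * d * φ - (n : ℝ) ^ 2 * d ^ 2 * ζ)) ∧
    ∀ N : ℕ, 1 ≤ N →
      nfGain c0 fc fm d φ ζ φbar ζbar N = 1 ∧
      ∀ φbar' ζbar' : ℝ, nfGain c0 fc fm d φ ζ φbar' ζbar' N ≤ 1 := by
  have hηpos : 0 < η := by rw [hη]; positivity
  have h1 : 0 < 1 - φ ^ 2 := by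
    obtain ⟨h1, h2⟩ := hφ
    nlinarith [abs_lt.mp (abs_lt.mpr ⟨h1, h2⟩)]
  have h2 : 0 < 1 - η ^ 2 * φ ^ 2 := by
    rw [hη]; have := abs_lt.mp hηφ; nlinarith
  have hζbar' : ζbar = η * ζ := by
    rw [hζbar, hφbar, hrbar, hζ]
    field_simp
  have hfmη : fm * η = fc := by
    rw [hη]; field_simp
  have key : ∀ n : ℕ,
      fm * ((n : ℝ) * d * φbar - (n : ℝ) ^ 2 * d ^ 2 * ζbar) =
        fc * ((n : ℝ) * d * φ - (n : ℝ) ^ 2 * d ^ 2 * ζ) := by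
    intro n
    rw [hζbar', hφbar, ← hfmη]
    ring
  refine ⟨key, fun N hN => ⟨?_, ?_⟩⟩
  · unfold nfGain
    have : ∀ n ∈ Finset.range N,
        Complex.exp ((2 * π * Complex.I / (c0 : ℂ)) *
          ((fm * ((n : ℝ) * d * φbar - (n : ℝ) ^ 2 * d ^ 2 * ζbar) -
            fc * ((n : ℝ) * d * φ - (n : ℝ) ^ 2 * d ^ 2 * ζ) : ℝ) : ℂ)) = 1 := by
      intro n _
      rw [key n]
      simp
    rw [Finset.sum_congr rfl this]
    have hN' : (0 : ℝ) < N := by exact_mod_cast hN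
    simp
    field_simp
  · intro φbar' ζbar'
    unfold nfGain
    have hN' : (0 : ℝ) < N := by exact_mod_cast hN
    have habs : ‖∑ n ∈ Finset.range N,
        Complex.exp ((2 * π * Complex.I / (c0 : ℂ)) *
          ((fm * ((n : ℝ) * d * φbar' - (n : ℝ) ^ 2 * d ^ 2 * ζbar') -
            fc * ((n : ℝ) * d * φ - (n : ℝ) ^ 2 * d ^ 2 * ζ) : ℝ) : ℂ))‖ ≤ N := by
      calc _ ≤ ∑ n ∈ Finset.range N,
            ‖Complex.exp ((2 * π * Complex.I / (c0 : ℂ)) *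
              ((fm * ((n : ℝ) * d * φbar' - (n : ℝ) ^ 2 * d ^ 2 * ζbar') -
                fc * ((n : ℝ) * d * φ - (n : ℝ) ^ 2 * d ^ 2 * ζ) : ℝ) : ℂ))‖ :=
            norm_sum_le _ _
        _ = N := by
            rw [Finset.sum_congr rfl (fun n _ => aux_abs_exp c0 _)]
            simp
    have h0 : 0 ≤ ‖∑ n ∈ Finset.range N,
        Complex.exp ((2 * π * Complex.I / (c0 : ℂ)) *
          ((fm * ((n : ℝ) * d * φbar' - (n : ℝ) ^ 2 * d ^ 2 * ζbar') -
            fc * ((n : ℝ) * d * φ - (n : ℝ) ^ 2 * d ^ 2 * ζ) : ℝ) : ℂ))‖ :=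
      norm_nonneg _
    rw [div_mul_eq_mul_div, one_mul, div_le_one (by positivity)]
    exact pow_le_pow_left₀ h0 habs 2
end

section
/- Let N be a natural number with N ≥ 3 and let α, β be real numbers with |α + β| < 1 and |β| < 1/2. If the normalized array gain (1/N²)·|∑_{n=0}^{N-1} exp(2πi·(α·n + β·n²))|² equals 1, then α = 0 and β = 0. -/
open Real Complex Finset

/-- Uniqueness part of Theorem 1: if the normalized array gain with linear mismatch `α`
and quadratic mismatch `β` attains its peak value `1`, and the mismatches are small
enough to exclude modulo-one ambiguities, then `α = 0` and `β = 0`. -/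
theorem array_gain_peak_unique (N : ℕ) (hN : 3 ≤ N) (α β : ℝ)
    (h1 : |α + β| < 1) (h2 : |β| < 1 / 2)
    (hG : (1 / (N : ℝ) ^ 2) *
        ‖∑ n ∈ Finset.range N,
          Complex.exp (2 * π * Complex.I *
            ((α * (n : ℝ) + β * (n : ℝ) ^ 2 : ℝ) : ℂ))‖ ^ 2 = 1) :
    α = 0 ∧ β = 0 := by
  set u : ℕ → ℂ := fun n => Complex.exp (2 * π * Complex.I *
      ((α * (n : ℝ) + β * (n : ℝ) ^ 2 : ℝ) : ℂ)) with hu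
  set S : ℂ := ∑ n ∈ Finset.range N, u n with hSdef
  have hNpos : (0:ℝ) < N := by
    have : (3:ℝ) ≤ N := by exact_mod_cast hN
    linarith
  have habs : ∀ n : ℕ, ‖u n‖ = 1 := by
    intro n
    simp only [hu]
    have hrw : 2 * (π:ℂ) * Complex.I * ((α * (n : ℝ) + β * (n : ℝ) ^ 2 : ℝ) : ℂ)
        = ((2 * π * (α * (n : ℝ) + β * (n : ℝ) ^ 2) : ℝ) : ℂ) * Complex.I := by
      push_cast; ring
    rw [hrw, Complex.norm_exp_ofReal_mul_I]
  -- |S| = N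
  have hS : ‖S‖ = N := by
    have hN2 : (N:ℝ)^2 ≠ 0 := by positivity
    have hsq : ‖S‖ ^ 2 = (N:ℝ)^2 := by
      field_simp at hG
      nlinarith [hG, norm_nonneg S, hNpos]
    nlinarith [norm_nonneg S]
  -- each term of the sum below is ≤ N
  have hle : ∀ n ∈ Finset.range N, ((starRingEnd ℂ) S * u n).re ≤ (N:ℝ) := by
    intro n _
    calc ((starRingEnd ℂ) S * u n).re ≤ ‖(starRingEnd ℂ) S * u n‖ :=
          Complex.re_le_norm _
      _ = ‖S‖ * ‖u n‖ := by
          rw [norm_mul, Complex.norm_conj]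
      _ = N := by rw [hS, habs n, mul_one]
  -- sum equals N * N
  have hsum : ∑ n ∈ Finset.range N, ((starRingEnd ℂ) S * u n).re = ∑ n ∈ Finset.range N, (N:ℝ) := by
    have h1' : ∑ n ∈ Finset.range N, ((starRingEnd ℂ) S * u n).re
        = ((starRingEnd ℂ) S * S).re := by
      rw [hSdef, Finset.mul_sum]
      exact (Complex.re_sum _ _).symm
    have h2' : ((starRingEnd ℂ) S * S).re = ‖S‖ ^ 2 := by
      rw [mul_comm, Complex.mul_conj]
      simp [Complex.sq_norm]
    rw [h1', h2', hS]
    simp [sq]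
  have heq : ∀ n ∈ Finset.range N, ((starRingEnd ℂ) S * u n).re = (N:ℝ) :=
    (Finset.sum_eq_sum_iff_of_le hle).mp hsum
  -- hence conj S * u n = N for all n < N
  have hz : ∀ n ∈ Finset.range N, (starRingEnd ℂ) S * u n = (N:ℂ) := by
    intro n hn
    set z := (starRingEnd ℂ) S * u n with hzdef
    have hre : z.re = (N:ℝ) := heq n hn
    have habsz : ‖z‖ = (N:ℝ) := by
      rw [hzdef, norm_mul, Complex.norm_conj, hS, habs n, mul_one]
    have him : z.im = 0 := by
      have h' : z.re ^ 2 + z.im ^ 2 = ‖z‖ ^ 2 := by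
        rw [Complex.sq_norm, Complex.normSq_apply]; ring
      rw [hre, habsz] at h'
      nlinarith [sq_nonneg z.im]
    apply Complex.ext
    · simpa using hre
    · simpa using him
  -- u 0 = 1, hence conj S = N, hence u n = 1 for all n < N
  have hu0 : u 0 = 1 := by
    rw [hu]; norm_num
  have hconjS : (starRingEnd ℂ) S = (N:ℂ) := by
    have := hz 0 (Finset.mem_range.mpr (by omega))
    rwa [hu0, mul_one] at this
  have hNC : (N:ℂ) ≠ 0 := by
    exact_mod_cast Nat.cast_ne_zero.mpr (by omega)
  have hun : ∀ n ∈ Finset.range N, u n = 1 := by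
    intro n hn
    have := hz n hn
    rw [hconjS] at this
    field_simp at this
    exact this
  -- from u n = 1 deduce αn + βn² ∈ ℤ
  have hint : ∀ n ∈ Finset.range N, ∃ k : ℤ, α * (n:ℝ) + β * (n:ℝ)^2 = k := by
    intro n hn
    have h := hun n hn
    rw [hu] at h
    rw [Complex.exp_eq_one_iff] at h
    obtain ⟨k, hk⟩ := h
    refine ⟨k, ?_⟩
    have h2pi : (2 * (π:ℂ) * Complex.I) ≠ 0 := by
      simp [Real.pi_ne_zero, Complex.I_ne_zero]
    have : ((α * (n:ℝ) + β * (n:ℝ)^2 : ℝ) : ℂ) = (k:ℂ) := by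
      have hk' : 2 * (π:ℂ) * Complex.I * ((α * (n:ℝ) + β * (n:ℝ)^2 : ℝ) : ℂ)
          = 2 * (π:ℂ) * Complex.I * (k:ℂ) := by
        rw [hk]; ring
      exact mul_left_cancel₀ h2pi hk'
    exact_mod_cast this
  obtain ⟨k1, hk1⟩ := hint 1 (Finset.mem_range.mpr (by omega))
  obtain ⟨k2, hk2⟩ := hint 2 (Finset.mem_range.mpr (by omega))
  norm_num at hk1 hk2
  -- k1 = 0
  have hk1z : k1 = 0 := by
    have : |(k1:ℝ)| < 1 := by rw [← hk1]; exact h1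
    have h' : |k1| < 1 := by exact_mod_cast this
    have h'' := abs_lt.mp h'
    omega
  have hab : α + β = 0 := by rw [hk1, hk1z]; norm_num
  have hk2z : k2 = 0 := by
    have h2b : (2:ℝ) * β = k2 := by
      have : α = -β := by linarith
      rw [this] at hk2; linarith
    have : |(k2:ℝ)| < 1 := by
      rw [← h2b]
      rw [abs_mul, _root_.abs_two]
      linarith [h2]
    have h' : |k2| < 1 := by exact_mod_cast this
    have h'' := abs_lt.mp h'
    omega
  have hb : β = 0 := by
    have : α = -β := by linarith
    rw [this] at hk2
    rw [hk2z] at hk2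
    push_cast at hk2
    linarith
  exact ⟨by linarith, hb⟩
end
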